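/- Let d ≥ 1 (dimension), r > 0, ε ≥ 0, and x, u, τ, C ∈ ℝ^d be such that (9/10)·r ≤ |x + u| ≤ (11/10)·r and |τ − C| ≤ r/10. Then x + u + τ − C ≠ 0 and | x + u + ε·(x + u + τ − C)/|x + u + τ − C| | ≥ |x + u| + ε/3. -/
import Mathlib


open scoped RealInnerProductSpace

/-- Elementary geometric claim: if `(9/10)r ≤ |x+u| ≤ (11/10)r` and
`|τ − C| ≤ r/10`, then `x+u+τ−C ≠ 0` and pushing `x+u` by `ε` in the direction of
`x+u+τ−C` increases the norm by at least `ε/3`. -/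
theorem radial_push_increases_norm
    (d : ℕ) (hd : 1 ≤ d) (r ε : ℝ) (hr : 0 < r) (hε : 0 ≤ ε)
    (x u τ C : EuclideanSpace ℝ (Fin d))
    (h1 : 9 / 10 * r ≤ ‖x + u‖) (h2 : ‖x + u‖ ≤ 11 / 10 * r)
    (h3 : ‖τ - C‖ ≤ r / 10) :
    x + u + τ - C ≠ 0 ∧
      ‖x + u‖ + ε / 3 ≤ ‖x + u + (ε / ‖x + u + τ - C‖) • (x + u + τ - C)‖ := by
  set y := x + u with hy
  set v := τ - C with hv
  have hveq : x + u + τ - C = y + v := by rw [hy, hv]; abel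
  rw [hveq]
  set w := y + v with hw
  -- lower bound on ‖w‖
  have htri : ‖y‖ ≤ ‖w‖ + ‖v‖ := by
    have := norm_add_le w (-v)
    simpa [hw, add_assoc] using this
  have hwlb : 8 / 10 * r ≤ ‖w‖ := by linarith
  have hwpos : 0 < ‖w‖ := by linarith
  have hwne : w ≠ 0 := by
    intro h
    rw [h, norm_zero] at hwpos
    exact lt_irrefl 0 hwpos
  refine ⟨hwne, ?_⟩
  have hwub : ‖w‖ ≤ 12 / 10 * r := by
    have := norm_add_le y v
    linarith
  -- inner product bound
  have hinner : ⟪y, w⟫ = ‖y‖ ^ 2 + ⟪y, v⟫ := by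
    rw [hw, inner_add_right, real_inner_self_eq_norm_sq]
  have habs : |⟪y, v⟫| ≤ ‖y‖ * ‖v‖ := abs_real_inner_le_norm y v
  have hiv : -(‖y‖ * ‖v‖) ≤ ⟪y, v⟫ := neg_le_of_abs_le habs
  have hvnn : (0:ℝ) ≤ ‖v‖ := norm_nonneg v
  have hynn : (0:ℝ) ≤ ‖y‖ := norm_nonneg y
  have hkey : (1/3) * (‖y‖ * ‖w‖) ≤ ⟪y, w⟫ := by
    rw [hinner]
    nlinarith [mul_le_mul_of_nonneg_left h3 hynn]
  -- expand the norm
  set t := ε / ‖w‖ with ht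
  have htnn : 0 ≤ t := div_nonneg hε hwpos.le
  have htw : t * ‖w‖ = ε := div_mul_cancel₀ ε hwpos.ne'
  have hexp : ‖y + t • w‖ ^ 2 = ‖y‖ ^ 2 + 2 * (t * ⟪y, w⟫) + ε ^ 2 := by
    rw [norm_add_sq_real, real_inner_smul_right, norm_smul, Real.norm_eq_abs,
      abs_of_nonneg htnn, mul_pow]
    have : t ^ 2 * ‖w‖ ^ 2 = ε ^ 2 := by
      rw [← mul_pow, htw]
    rw [this]
  have hfin : 2/3 * ε * ‖y‖ ≤ 2 * (t * ⟪y, w⟫) := by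
    have h2t : t * ((1/3) * (‖y‖ * ‖w‖)) ≤ t * ⟪y, w⟫ :=
      mul_le_mul_of_nonneg_left hkey htnn
    have heq : t * ((1/3) * (‖y‖ * ‖w‖)) = 1/3 * ε * ‖y‖ := by
      rw [show t * ((1/3) * (‖y‖ * ‖w‖)) = (1/3) * ‖y‖ * (t * ‖w‖) by ring, htw]; ring
    linarith
  have hsq : (‖y‖ + ε / 3) ^ 2 ≤ ‖y + t • w‖ ^ 2 := by
    rw [hexp]
    nlinarith [sq_nonneg ε, hfin]
  have hnn : 0 ≤ ‖y‖ + ε / 3 := by linarith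
  calc ‖y‖ + ε / 3 = Real.sqrt ((‖y‖ + ε / 3) ^ 2) := (Real.sqrt_sq hnn).symm
    _ ≤ Real.sqrt (‖y + t • w‖ ^ 2) := Real.sqrt_le_sqrt hsq
    _ = ‖y + t • w‖ := Real.sqrt_sq (norm_nonneg _)
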